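/- arXiv:1406.0591 — 3 statements merged into one kernel-verified Lean document; each statement's English description precedes it below -/
import Mathlib

section
/- Let K = ℚ(q), N ≥ 3, and 1 ≤ i, j ≤ ⌊N/2⌋. Define d^{(1)}(z) = ∏_{s=1}^{min(i,j,N−i,N−j)} (z − (−q)^{|i−j|+2s}) and d^{(2)}(z) = ∏_{s=1}^{min(i,j)} (z − (−q)^{|i−j|+2s})(z + q^N(−q)^{−i−j+2s}) in K[z]. Then for every integer m with m ≡ i + j (mod 2), the multiplicity of (−q)^m as a root of d^{(1)}(z) equals the multiplicity of (−q)^m as a root of d^{(2)}(z). -/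
open Polynomial

noncomputable def qq : RatFunc ℚ := RatFunc.X

lemma qq_ne_zero : qq ≠ 0 := RatFunc.X_ne_zero

lemma qq_pow_ne_neg_one (n : ℕ) : qq ^ n ≠ -1 := by
  intro h
  have : (Polynomial.X : ℚ[X]) ^ n = -1 := by
    apply IsFractionRing.injective ℚ[X] (RatFunc ℚ)
    simpa [qq, RatFunc.algebraMap_X, map_pow] using h
  have h2 := congrArg (Polynomial.eval 1) this
  norm_num at h2

lemma qq_zpow_ne_neg_one (c : ℤ) : qq ^ c ≠ -1 := by
  rcases le_or_gt 0 c with hc | hc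
  · lift c to ℕ using hc
    rw [zpow_natCast]
    exact qq_pow_ne_neg_one c
  · intro h
    have h' : qq ^ (-c) = -1 := by
      rw [zpow_neg, h]; norm_num
    have : (0:ℤ) ≤ -c := by omega
    lift (-c) to ℕ using this with n hn
    rw [zpow_natCast] at h'
    exact qq_pow_ne_neg_one n h'

lemma neg_zpow' (a : RatFunc ℚ) (n : ℤ) : (-a) ^ n = (-1) ^ n * a ^ n := by
  rw [← neg_one_mul, mul_zpow]

lemma qq_zpow_add_ne_zero (a b : ℤ) : qq ^ a + qq ^ b ≠ 0 := by
  intro h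
  have hab : qq ^ (a - b) = -1 := by
    rw [zpow_sub₀ qq_ne_zero]
    have ha : qq ^ a = -qq ^ b := by linear_combination h
    rw [ha, neg_div, div_self (zpow_ne_zero _ qq_ne_zero)]
  exact qq_zpow_ne_neg_one _ hab

theorem stmt4 (N i j : ℕ) (hN : 3 ≤ N) (hi1 : 1 ≤ i) (hi2 : i ≤ N / 2)
    (hj1 : 1 ≤ j) (hj2 : j ≤ N / 2)
    (d1 d2 : Polynomial (RatFunc ℚ))
    (hd1 : d1 = ∏ s ∈ Finset.Icc 1 (min (min i j) (min (N - i) (N - j))),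
      (X - C ((-qq) ^ (|(i : ℤ) - (j : ℤ)| + 2 * (s : ℤ)))))
    (hd2 : d2 = ∏ s ∈ Finset.Icc 1 (min i j),
      (X - C ((-qq) ^ (|(i : ℤ) - (j : ℤ)| + 2 * (s : ℤ)))) *
      (X + C (qq ^ (N : ℤ) * (-qq) ^ (-(i : ℤ) - (j : ℤ) + 2 * (s : ℤ)))))
    (m : ℤ) (hm : (2 : ℤ) ∣ (m - ((i : ℤ) + (j : ℤ)))) :
    d1.rootMultiplicity ((-qq) ^ m) = d2.rootMultiplicity ((-qq) ^ m) := by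
  have hmin : min (min i j) (min (N - i) (N - j)) = min i j := by omega
  rw [hmin] at hd1
  -- d2 = d1 * G
  set G : Polynomial (RatFunc ℚ) := ∏ s ∈ Finset.Icc 1 (min i j),
      (X + C (qq ^ (N : ℤ) * (-qq) ^ (-(i : ℤ) - (j : ℤ) + 2 * (s : ℤ)))) with hG
  have hd2' : d2 = d1 * G := by
    rw [hd2, hd1, hG, Finset.prod_mul_distrib]
  -- each factor of G does not vanish at (-qq)^m
  have hfac : ∀ s : ℕ, ((-qq) ^ m + qq ^ (N : ℤ) * (-qq) ^ (-(i : ℤ) - (j : ℤ) + 2 * (s : ℤ))) ≠ 0 := by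
    intro s
    set t : ℤ := -(i : ℤ) - (j : ℤ) + 2 * (s : ℤ) with ht
    have hpar : (2 : ℤ) ∣ (m - t) := by
      obtain ⟨k, hk⟩ := hm
      exact ⟨k + (i:ℤ) + (j:ℤ) - s, by omega⟩
    have hqN : qq ^ (N : ℤ) * (-qq) ^ t = (-1) ^ t * qq ^ ((N : ℤ) + t) := by
      rw [neg_zpow', mul_left_comm, ← zpow_add₀ qq_ne_zero]
    have hm' : (-qq) ^ m = (-1) ^ m * qq ^ m := by rw [neg_zpow']
    rw [hm', hqN]
    have hsign : ((-1 : RatFunc ℚ)) ^ t = (-1) ^ m := by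
      obtain ⟨k, hk⟩ := hpar
      have : t = m - 2 * k := by omega
      rw [this, zpow_sub₀ (by norm_num : (-1 : RatFunc ℚ) ≠ 0), zpow_mul]
      norm_num
    rw [hsign, ← mul_add]
    exact mul_ne_zero (zpow_ne_zero _ (by norm_num)) (qq_zpow_add_ne_zero _ _)
  have hfne : ∀ s ∈ Finset.Icc 1 (min i j),
      (X + C (qq ^ (N : ℤ) * (-qq) ^ (-(i : ℤ) - (j : ℤ) + 2 * (s : ℤ))) : Polynomial (RatFunc ℚ)) ≠ 0 := by
    intro s _
    exact Polynomial.X_add_C_ne_zero _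
  have hGne : G ≠ 0 := Finset.prod_ne_zero_iff.mpr hfne
  have hd1ne : d1 ≠ 0 := by
    rw [hd1]
    exact Finset.prod_ne_zero_iff.mpr fun s _ => Polynomial.X_sub_C_ne_zero _
  have hGroot : G.rootMultiplicity ((-qq) ^ m) = 0 := by
    apply Polynomial.rootMultiplicity_eq_zero
    intro hroot
    rw [hG, Polynomial.IsRoot, Polynomial.eval_prod] at hroot
    obtain ⟨s, _, hs⟩ := Finset.prod_eq_zero_iff.mp hroot
    simp only [Polynomial.eval_add, Polynomial.eval_X, Polynomial.eval_C] at hs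
    exact hfac s hs
  rw [hd2', Polynomial.rootMultiplicity_mul (mul_ne_zero hd1ne hGne), hGroot, add_zero]
end

section
/- Let K = ℚ(q), N ≥ 3, and suppose 1 ≤ i ≤ ⌊N/2⌋ < j ≤ N−1. Define d^{(1)}(z) = ∏_{s=1}^{min(i,j,N−i,N−j)} (z − (−q)^{|i−j|+2s}) and d^{(2)}(z) = ∏_{s=1}^{min(i,N−j)} (z − (−q)^{|i−(N−j)|+2s})(z + q^N(−q)^{−i−(N−j)+2s}) in K[z]. Then for every integer m with m ≡ i + j (mod 2), the multiplicity of (−q)^m as a root of d^{(1)}(z) equals the multiplicity of (−1)^{N−1}(−q)^m as a root of d^{(2)}(z). -/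
open Polynomial

lemma u_ne_zero : (-qq) ≠ 0 := by
  simpa [qq] using RatFunc.X_ne_zero (K := ℚ)

lemma one_ne_neg_one_ratfunc : (1 : RatFunc ℚ) ≠ -1 := by
  intro h
  have h2 : algebraMap ℚ[X] (RatFunc ℚ) 1 = algebraMap ℚ[X] (RatFunc ℚ) (-1) := by
    simpa using h
  have := RatFunc.algebraMap_injective ℚ h2
  have h3 := congrArg (fun p : ℚ[X] => p.coeff 0) this
  norm_num at h3

lemma u_pow_eq_one {k : ℕ} (h : (-qq) ^ k = 1) : k = 0 := by
  have hmap : (-qq) ^ k = algebraMap ℚ[X] (RatFunc ℚ) ((-Polynomial.X) ^ k) := by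
    rw [map_pow, map_neg, RatFunc.algebraMap_X]; rfl
  have h1 : algebraMap ℚ[X] (RatFunc ℚ) ((-Polynomial.X) ^ k) =
      algebraMap ℚ[X] (RatFunc ℚ) 1 := by rw [← hmap, h, map_one]
  have h2 : ((-Polynomial.X : ℚ[X]) ^ k) = 1 := RatFunc.algebraMap_injective ℚ h1
  have h3 := congrArg Polynomial.natDegree h2
  simpa [Polynomial.natDegree_pow] using h3

lemma u_zpow_eq_one {k : ℤ} (h : (-qq) ^ k = 1) : k = 0 := by
  have hinv : (-qq) ^ (-k) = 1 := by rw [zpow_neg, h, inv_one]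
  rcases le_or_gt 0 k with hk | hk
  · have : (-qq) ^ k.toNat = 1 := by rw [← zpow_natCast, Int.toNat_of_nonneg hk]; exact h
    have := u_pow_eq_one this; omega
  · have : (-qq) ^ (-k).toNat = 1 := by
      rw [← zpow_natCast, Int.toNat_of_nonneg (by omega)]; exact hinv
    have := u_pow_eq_one this; omega

lemma u_zpow_inj {a b : ℤ} (h : (-qq) ^ a = (-qq) ^ b) : a = b := by
  have : (-qq) ^ (a - b) = 1 := by
    rw [zpow_sub₀ u_ne_zero, h, div_self (zpow_ne_zero _ u_ne_zero)]
  have := u_zpow_eq_one this; omega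

lemma u_zpow_ne_neg_one (k : ℤ) : (-qq) ^ k ≠ -1 := by
  intro h
  have h2 : (-qq) ^ (2 * k) = 1 := by
    rw [mul_comm, zpow_mul, h]; norm_num
  have hk0 : k = 0 := by have := u_zpow_eq_one h2; omega
  rw [hk0, zpow_zero] at h
  exact one_ne_neg_one_ratfunc h

lemma rootMultiplicity_finset_prod {R : Type*} [CommRing R] [IsDomain R]
    {ι : Type*} (s : Finset ι) (f : ι → R[X]) (hf : ∀ i ∈ s, f i ≠ 0) (x : R) :
    (∏ i ∈ s, f i).rootMultiplicity x = ∑ i ∈ s, (f i).rootMultiplicity x := by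
  classical
  induction s using Finset.cons_induction with
  | empty => simp
  | cons a s ha ih =>
    rw [Finset.prod_cons, Finset.sum_cons,
      Polynomial.rootMultiplicity_mul (mul_ne_zero (hf a (Finset.mem_cons_self a s))
        (Finset.prod_ne_zero_iff.2 fun i hi => hf i (Finset.mem_cons_of_mem hi))),
      ih (fun i hi => hf i (Finset.mem_cons_of_mem hi))]

theorem stmt5 (N i j : ℕ) (hN : 3 ≤ N) (hi1 : 1 ≤ i) (hi2 : i ≤ N / 2)
    (hj1 : N / 2 < j) (hj2 : j ≤ N - 1)
    (d1 d2 : Polynomial (RatFunc ℚ))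
    (hd1 : d1 = ∏ s ∈ Finset.Icc 1 (min (min i j) (min (N - i) (N - j))),
      (X - C ((-qq) ^ (|(i : ℤ) - (j : ℤ)| + 2 * (s : ℤ)))))
    (hd2 : d2 = ∏ s ∈ Finset.Icc 1 (min i (N - j)),
      (X - C ((-qq) ^ (|(i : ℤ) - ((N : ℤ) - (j : ℤ))| + 2 * (s : ℤ)))) *
      (X + C (qq ^ (N : ℤ) * (-qq) ^ (-(i : ℤ) - ((N : ℤ) - (j : ℤ)) + 2 * (s : ℤ)))))
    (m : ℤ) (hm : (2 : ℤ) ∣ (m - ((i : ℤ) + (j : ℤ)))) :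
    d1.rootMultiplicity ((-qq) ^ m) =
      d2.rootMultiplicity (((-1 : RatFunc ℚ)) ^ (N - 1) * (-qq) ^ m) := by
  classical
  have hij : i < j := lt_of_le_of_lt hi2 hj1
  have hmin1 : min i j = i := min_eq_left (le_of_lt hij)
  have hmin2 : min (N - i) (N - j) = N - j := min_eq_right (by omega)
  have habs1 : |(i : ℤ) - (j : ℤ)| = (j : ℤ) - (i : ℤ) := by
    have hnn := abs_nonneg ((i : ℤ) - (j : ℤ))
    rcases abs_choice ((i : ℤ) - (j : ℤ)) with h | h <;> omega
  have hqN : ∀ s : ℕ, qq ^ (N : ℤ) * (-qq) ^ (-(i : ℤ) - ((N : ℤ) - (j : ℤ)) + 2 * (s : ℤ)) =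
      (-1 : RatFunc ℚ) ^ N * (-qq) ^ ((j : ℤ) - (i : ℤ) + 2 * (s : ℤ)) := by
    intro s
    have h1 : qq ^ (N : ℤ) = (-1 : RatFunc ℚ) ^ N * (-qq) ^ (N : ℤ) := by
      rw [zpow_natCast, zpow_natCast, ← neg_neg qq, neg_pow (-qq), neg_neg]
    rw [h1, mul_assoc, ← zpow_add₀ u_ne_zero,
      show (N : ℤ) + (-(i : ℤ) - ((N : ℤ) - (j : ℤ)) + 2 * (s : ℤ))
        = (j : ℤ) - (i : ℤ) + 2 * (s : ℤ) from by ring]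
  have hplusne : ∀ c : RatFunc ℚ, (X + C c : Polynomial (RatFunc ℚ)) ≠ 0 := by
    intro c
    rw [← sub_neg_eq_add, ← map_neg C]
    exact X_sub_C_ne_zero _
  subst hd1 hd2
  rw [hmin1, hmin2]
  rw [rootMultiplicity_finset_prod _ _ (fun s _ => X_sub_C_ne_zero _),
    rootMultiplicity_finset_prod _ _
      (fun s _ => mul_ne_zero (X_sub_C_ne_zero _) (hplusne _))]
  apply Finset.sum_congr rfl
  intro s hs
  rw [habs1]
  rw [Polynomial.rootMultiplicity_mul (mul_ne_zero (X_sub_C_ne_zero _) (hplusne _))]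
  have hsecond : (X + C (qq ^ (N : ℤ) * (-qq) ^ (-(i : ℤ) - ((N : ℤ) - (j : ℤ)) + 2 * (s : ℤ))))
      = X - C (-((-1 : RatFunc ℚ) ^ N * (-qq) ^ ((j : ℤ) - (i : ℤ) + 2 * (s : ℤ)))) := by
    rw [hqN s, map_neg, sub_neg_eq_add]
  rw [hsecond, Polynomial.rootMultiplicity_X_sub_C, Polynomial.rootMultiplicity_X_sub_C,
    Polynomial.rootMultiplicity_X_sub_C]
  have hsign : -((-1 : RatFunc ℚ) ^ N) = (-1 : RatFunc ℚ) ^ (N - 1) := by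
    conv_lhs => rw [show N = (N - 1) + 1 from by omega, pow_succ]
    ring
  have hcond2 : ((-1 : RatFunc ℚ) ^ (N - 1) * (-qq) ^ m =
      -((-1 : RatFunc ℚ) ^ N * (-qq) ^ ((j : ℤ) - (i : ℤ) + 2 * (s : ℤ)))) ↔
      ((-qq) ^ m = (-qq) ^ ((j : ℤ) - (i : ℤ) + 2 * (s : ℤ))) := by
    rw [← neg_mul, hsign]
    constructor
    · intro h
      exact mul_left_cancel₀ (pow_ne_zero _ (neg_ne_zero.2 one_ne_zero)) h
    · intro h; rw [h]
  have hA : ((-1 : RatFunc ℚ)) ^ (N - 1) * (-qq) ^ m ≠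
      (-qq) ^ (|(i : ℤ) - ((N : ℤ) - (j : ℤ))| + 2 * (s : ℤ)) := by
    rcases Nat.even_or_odd N with he | ho
    · obtain ⟨k, hk⟩ := he
      have hodd : Odd (N - 1) := ⟨k - 1, by omega⟩
      rw [hodd.neg_one_pow]
      intro h
      have h2 : (-qq) ^ (|(i : ℤ) - ((N : ℤ) - (j : ℤ))| + 2 * (s : ℤ) - m) = -1 := by
        rw [zpow_sub₀ u_ne_zero, ← h, neg_one_mul, neg_div,
          div_self (zpow_ne_zero _ u_ne_zero)]
      exact u_zpow_ne_neg_one _ h2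
    · obtain ⟨k, hk⟩ := ho
      have heven : Even (N - 1) := ⟨k, by omega⟩
      rw [heven.neg_one_pow, one_mul]
      intro h
      have hme := u_zpow_inj h
      rcases abs_choice ((i : ℤ) - ((N : ℤ) - (j : ℤ))) with h2 | h2 <;>
        rw [h2] at hme <;> omega
  rw [if_neg hA, zero_add, if_congr hcond2 rfl rfl]
end

section
/- Let k be a field, N ≥ 2 an integer, and let {ψ_a(z)}_{a∈ℤ} be a family of invertible formal power series in k[[z]] satisfying ψ_a(0)·ψ_{−a−N+1}(0) = 1 for all a ∈ ℤ and ∏_{k=1−N}^{0} ψ_k(0) = 1. Define φ_0(z) := 1; φ_k(z) := ψ_{k−N}(z)^{−1} for 1 ≤ k ≤ N−2; φ_{N−1}(z) := ψ_0(z)·∏_{k=1}^{N−2} φ_k(z)^{−1}; and recursively φ_k(z) := (ψ_{k−N+1}(z)/ψ_{k−N}(z))·φ_{k−N}(z) for k ≥ N, and φ_k(z) := (ψ_k(z)/ψ_{k+1}(z))·φ_{k+N}(z) for k ≤ −1. Then the family {φ_k(z)}_{k∈ℤ} satisfies: (a) φ_a(0)·φ_{−a}(0) = 1 for every a ∈ ℤ,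 and (b) ∏_{k=a}^{a+N−1} φ_k(z) = ψ_a(z) for every a ∈ ℤ. -/
/-- Auxiliary field-level lemma for part (a). -/
theorem stmt6_aux {K : Type*} [Field K] (N : ℕ) (hN : 2 ≤ N) (f g : ℤ → K)
    (hg1 : ∀ a : ℤ, g a * g (-a - (N : ℤ) + 1) = 1)
    (hg2 : ∏ i ∈ Finset.Icc (1 - (N : ℤ)) 0, g i = 1)
    (hf0 : f 0 = 1)
    (hfmid : ∀ i : ℤ, 1 ≤ i → i ≤ (N : ℤ) - 2 → f i * g (i - (N : ℤ)) = 1)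
    (hftop : f ((N : ℤ) - 1) * ∏ i ∈ Finset.Icc (1 : ℤ) ((N : ℤ) - 2), f i = g 0)
    (key : ∀ a : ℤ, f (a + (N : ℤ)) * g a = g (a + 1) * f a) :
    ∀ a : ℤ, f a * f (-a) = 1 := by
  have hN2 : (2 : ℤ) ≤ (N : ℤ) := by exact_mod_cast hN
  have hfmid' : ∀ a : ℤ, 1 ≤ a → a ≤ (N : ℤ) - 2 → f a = g (1 - a) := by
    intro a h1 h2
    have hA := hfmid a h1 h2
    have hB := hg1 (a - (N : ℤ))
    rw [show -(a - (N : ℤ)) - (N : ℤ) + 1 = 1 - a by ring] at hB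
    linear_combination g (1 - a) * hA - f a * hB
  have hftop' : f ((N : ℤ) - 1) = g (2 - (N : ℤ)) := by
    have hre : ∏ i ∈ Finset.Icc (1 : ℤ) ((N : ℤ) - 2), f i
        = ∏ j ∈ Finset.Icc (3 - (N : ℤ)) 0, g j := by
      rw [show (∏ i ∈ Finset.Icc (1 : ℤ) ((N : ℤ) - 2), f i)
          = ∏ i ∈ Finset.Icc (1 : ℤ) ((N : ℤ) - 2), g (1 - i) from
        Finset.prod_congr rfl (fun i hi => by
          simp only [Finset.mem_Icc] at hi; exact hfmid' i hi.1 hi.2)]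
      have himg : Finset.Icc (3 - (N : ℤ)) 0
          = Finset.image (fun i => 1 - i) (Finset.Icc (1 : ℤ) ((N : ℤ) - 2)) := by
        ext x
        simp only [Finset.mem_image, Finset.mem_Icc]
        constructor
        · rintro ⟨h1, h2⟩; exact ⟨1 - x, ⟨by omega, by omega⟩, by ring⟩
        · rintro ⟨i, ⟨hi1, hi2⟩, rfl⟩; omega
      rw [himg, Finset.prod_image (fun i _ j _ h => by omega)]
    rw [hre] at hftop
    have hsplit : Finset.Icc (1 - (N : ℤ)) 0
        = insert (1 - (N : ℤ)) (insert (2 - (N : ℤ)) (Finset.Icc (3 - (N : ℤ)) 0)) := by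
      ext x; simp only [Finset.mem_Icc, Finset.mem_insert]; omega
    rw [hsplit, Finset.prod_insert (by
        simp only [Finset.mem_insert, Finset.mem_Icc]; omega),
      Finset.prod_insert (by simp only [Finset.mem_Icc]; omega)] at hg2
    have hC := hg1 0
    rw [show -(0 : ℤ) - (N : ℤ) + 1 = 1 - (N : ℤ) by ring] at hC
    linear_combination (-(f ((N : ℤ) - 1))) * hg2
      + (g (1 - (N : ℤ)) * g (2 - (N : ℤ))) * hftop + g (2 - (N : ℤ)) * hC
  have hf1gen : ∀ a : ℤ, 1 ≤ a → a ≤ (N : ℤ) - 1 → f a = g (1 - a) := by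
    intro a h1 h2
    rcases lt_or_ge a ((N : ℤ) - 1) with h | h
    · exact hfmid' a h1 (by omega)
    · have ha : a = (N : ℤ) - 1 := by omega
      subst ha
      rw [show (1 : ℤ) - ((N : ℤ) - 1) = 2 - (N : ℤ) by ring]
      exact hftop'
  have hbase : ∀ a : ℤ, 0 ≤ a → a ≤ (N : ℤ) - 1 → f a * f (-a) = 1 := by
    intro a h0 h1
    rcases eq_or_lt_of_le h0 with h | h
    · rw [← h]; simp [hf0]
    · have hfa := hf1gen a (by omega) h1
      have hfb := hf1gen (-a + (N : ℤ)) (by omega) (by omega)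
      have hk := key (-a)
      have hd := hg1 (-a)
      rw [show -(-a) - (N : ℤ) + 1 = 1 - (-a + (N : ℤ)) by ring] at hd
      rw [show -a + 1 = 1 - a by ring] at hk
      rw [hfb] at hk
      rw [hfa]
      linear_combination hd - hk
  have hper : ∀ a : ℤ, f (a + (N : ℤ)) * f (-(a + (N : ℤ))) = f a * f (-a) := by
    intro a
    have h1 := key a
    have h2 := key (-a - (N : ℤ))
    rw [show -a - (N : ℤ) + (N : ℤ) = -a by ring] at h2
    have h3 := hg1 a
    have h4 := hg1 (a + 1)
    rw [show -(a + 1) - (N : ℤ) + 1 = -a - (N : ℤ) by ring] at h4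
    rw [show -(a + (N : ℤ)) = -a - (N : ℤ) by ring]
    have key2 : f (a + (N : ℤ)) * f (-a - (N : ℤ))
          * ((g a * g (-a - (N : ℤ) + 1)) * (g (a + 1) * g (-a - (N : ℤ))))
        = f a * f (-a)
          * ((g (a + 1) * g (-a - (N : ℤ))) * (g (a + 1) * g (-a - (N : ℤ)))) := by
      linear_combination
        (f (-a - (N : ℤ)) * g (-a - (N : ℤ) + 1) * g (a + 1) * g (-a - (N : ℤ))) * h1
        - (g (a + 1) * f a * g (a + 1) * g (-a - (N : ℤ))) * h2
    rw [h3, h4] at key2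
    simpa using key2
  have up : ∀ (n : ℕ) (a : ℤ),
      f (a + (n : ℤ) * (N : ℤ)) * f (-(a + (n : ℤ) * (N : ℤ))) = f a * f (-a) := by
    intro n
    induction n with
    | zero => intro a; norm_num
    | succ n ih =>
      intro a
      have e : a + ((n + 1 : ℕ) : ℤ) * (N : ℤ) = (a + (n : ℤ) * (N : ℤ)) + (N : ℤ) := by
        push_cast; ring
      rw [e, hper (a + (n : ℤ) * (N : ℤ))]
      exact ih a
  intro a
  have h1 := hbase (a % (N : ℤ)) (Int.emod_nonneg a (by omega))
    (by have := Int.emod_lt_of_pos a (show (0 : ℤ) < (N : ℤ) by omega); omega)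
  rcases le_or_gt 0 (a / (N : ℤ)) with hq | hq
  · have hn : ((a / (N : ℤ)).toNat : ℤ) = a / (N : ℤ) := Int.toNat_of_nonneg hq
    have harr : a % (N : ℤ) + ((a / (N : ℤ)).toNat : ℤ) * (N : ℤ) = a := by
      rw [hn]; linear_combination Int.mul_ediv_add_emod a (N : ℤ)
    have h2 := up (a / (N : ℤ)).toNat (a % (N : ℤ))
    rw [harr] at h2
    exact h2.trans h1
  · have hn : (((-(a / (N : ℤ))).toNat : ℤ)) = -(a / (N : ℤ)) :=
      Int.toNat_of_nonneg (by omega)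
    have harr : a + ((-(a / (N : ℤ))).toNat : ℤ) * (N : ℤ) = a % (N : ℤ) := by
      rw [hn]; linear_combination (-1 : ℤ) * Int.mul_ediv_add_emod a (N : ℤ)
    have h2 := up (-(a / (N : ℤ))).toNat a
    rw [harr] at h2
    exact h2.symm.trans h1



/-- Lemma 3.8: from a family `ψ` of invertible power series satisfying the two
constant-term conditions, the family `φ` defined by the recursion satisfies
(a) `φ_a(0) φ_{-a}(0) = 1` and (b) `∏_{k=a}^{a+N-1} φ_k = ψ_a`. The recursion
defining `φ` is encoded by the (equivalent) multiplicative equations below. -/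
theorem stmt6 {K : Type*} [Field K] (N : ℕ) (hN : 2 ≤ N)
    (ψ φ : ℤ → PowerSeries K)
    (hψu : ∀ a : ℤ, IsUnit (ψ a))
    (hψ1 : ∀ a : ℤ, PowerSeries.constantCoeff (ψ a) *
      PowerSeries.constantCoeff (ψ (-a - (N : ℤ) + 1)) = 1)
    (hψ2 : ∏ i ∈ Finset.Icc (1 - (N : ℤ)) 0, PowerSeries.constantCoeff (ψ i) = 1)
    (hφ0 : φ 0 = 1)
    (hφmid : ∀ i : ℤ, 1 ≤ i → i ≤ (N : ℤ) - 2 → φ i * ψ (i - (N : ℤ)) = 1)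
    (hφtop : φ ((N : ℤ) - 1) * ∏ i ∈ Finset.Icc (1 : ℤ) ((N : ℤ) - 2), φ i = ψ 0)
    (hφup : ∀ i : ℤ, (N : ℤ) ≤ i →
      φ i * ψ (i - (N : ℤ)) = ψ (i - (N : ℤ) + 1) * φ (i - (N : ℤ)))
    (hφdown : ∀ i : ℤ, i ≤ -1 → φ i * ψ (i + 1) = ψ i * φ (i + (N : ℤ))) :
    (∀ a : ℤ, PowerSeries.constantCoeff (φ a) *
      PowerSeries.constantCoeff (φ (-a)) = 1) ∧
    (∀ a : ℤ, ∏ i ∈ Finset.Icc a (a + (N : ℤ) - 1), φ i = ψ a) := by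
  have hN2 : (2 : ℤ) ≤ (N : ℤ) := by exact_mod_cast hN
  have E : ∀ a : ℤ, φ a * ψ (a + 1) = ψ a * φ (a + (N : ℤ)) := by
    intro a
    rcases le_or_gt a (-1) with h | h
    · exact hφdown a h
    · have h1 := hφup (a + (N : ℤ)) (by omega)
      rw [show a + (N : ℤ) - (N : ℤ) = a by ring] at h1
      linear_combination -h1
  have hrel : ∀ a : ℤ, (∏ i ∈ Finset.Icc a (a + (N : ℤ) - 1), φ i) * ψ (a + 1)
      = ψ a * ∏ i ∈ Finset.Icc (a + 1) (a + 1 + (N : ℤ) - 1), φ i := by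
    intro a
    have hs1 : Finset.Icc a (a + (N : ℤ) - 1)
        = insert a (Finset.Icc (a + 1) (a + (N : ℤ) - 1)) := by
      ext x; simp only [Finset.mem_Icc, Finset.mem_insert]; omega
    have hs2 : Finset.Icc (a + 1) (a + 1 + (N : ℤ) - 1)
        = insert (a + (N : ℤ)) (Finset.Icc (a + 1) (a + (N : ℤ) - 1)) := by
      ext x; simp only [Finset.mem_Icc, Finset.mem_insert]; omega
    rw [hs1, hs2, Finset.prod_insert (by simp only [Finset.mem_Icc]; omega),
      Finset.prod_insert (by simp only [Finset.mem_Icc]; omega)]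
    linear_combination (∏ i ∈ Finset.Icc (a + 1) (a + (N : ℤ) - 1), φ i) * E a
  have hb : ∀ a : ℤ, ∏ i ∈ Finset.Icc a (a + (N : ℤ) - 1), φ i = ψ a := by
    intro a
    induction a using Int.induction_on with
    | zero =>
      have hs : Finset.Icc (0 : ℤ) (0 + (N : ℤ) - 1)
          = insert 0 (insert ((N : ℤ) - 1) (Finset.Icc 1 ((N : ℤ) - 2))) := by
        ext x; simp only [Finset.mem_Icc, Finset.mem_insert]; omega
      rw [hs, Finset.prod_insert (by
          simp only [Finset.mem_insert, Finset.mem_Icc]; omega),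
        Finset.prod_insert (by simp only [Finset.mem_Icc]; omega), hφ0, one_mul, hφtop]
    | succ n ih =>
      have h1 := hrel (n : ℤ)
      rw [ih] at h1
      exact ((hψu _).mul_left_cancel h1).symm
    | pred n ih =>
      have h1 := hrel (-(n : ℤ) - 1)
      rw [show -(n : ℤ) - 1 + 1 = -(n : ℤ) by ring, ih] at h1
      exact (hψu _).mul_right_cancel h1
  refine ⟨?_, hb⟩
  have key : ∀ a : ℤ, PowerSeries.constantCoeff (φ (a + (N : ℤ)))
      * PowerSeries.constantCoeff (ψ a)
      = PowerSeries.constantCoeff (ψ (a + 1)) * PowerSeries.constantCoeff (φ a) := by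
    intro a
    have h := congrArg (PowerSeries.constantCoeff) (E a)
    simp only [map_mul] at h
    linear_combination -h
  exact stmt6_aux N hN (fun x => PowerSeries.constantCoeff (φ x))
    (fun x => PowerSeries.constantCoeff (ψ x)) hψ1 hψ2
    (by simp [hφ0])
    (fun i h1 h2 => by
      have h := congrArg (PowerSeries.constantCoeff) (hφmid i h1 h2)
      simpa using h)
    (by
      have h := congrArg (PowerSeries.constantCoeff) hφtop
      simpa using h)
    key
end
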